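/- For every cotransverse map f : [m] → [n], the induced map T(f) : [0,1]^m → [0,1]^n is non-expansive and quasi-isometric for \vec{d}_1: for all x, y ∈ [0,1]^m, \vec{d}_1(T(f)(x),T(f)(y)) ≤ \vec{d}_1(x,y), with equality whenever \vec{d}_1(x,y) < ∞ (i.e. whenever x ≤ y componentwise). -/

import Mathlib

open scoped ENNReal

instance : Fact ((0:ℝ) ≤ 1) := ⟨zero_le_one⟩

/- The directed metric `d⃗₁` on the vertices `{0,1}^n`. -/
open Classical in
noncomputable def vd {n : ℕ} (x y : Fin n → Bool) : ℝ≥0∞ :=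
  if x ≤ y then ∑ i, (if x i = y i then 0 else 1) else ⊤

def Cotransverse {m n : ℕ} (f : (Fin m → Bool) → (Fin n → Bool)) : Prop :=
  StrictMono f ∧ ∀ x y, vd x y = 1 → vd (f x) (f y) = 1

/-- The topologized map `T(f) : [0,1]^m → [0,1]^n` associated with a map
`f : {0,1}^m → {0,1}^n`, defined coordinatewise by the max-min (sup-inf)
formula, the sup and inf being taken in the complete lattice `[0,1]`
(so `sup ∅ = 0` and `inf ∅ = 1`). -/
noncomputable def Tmap {m n : ℕ} (f : (Fin m → Bool) → (Fin n → Bool))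
    (x : Fin m → unitInterval) : Fin n → unitInterval :=
  fun i => ⨆ (ε : Fin m → Bool) (_ : f ε i = true), ⨅ (k : Fin m) (_ : ε k = true), x k

/- The directed metric `d⃗₁` on the topological cube `[0,1]^n`. -/
open Classical in
noncomputable def dCube {n : ℕ} (x y : Fin n → unitInterval) : ℝ≥0∞ :=
  if x ≤ y then ∑ i, ENNReal.ofReal |(x i : ℝ) - (y i : ℝ)| else ⊤

/- ### Auxiliary material -/

open Classical MeasureTheory

/-- Hamming weight of a vertex. -/
noncomputable def wt {n : ℕ} (v : Fin n → Bool) : ℕ :=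
  (Finset.univ.filter fun i => v i = true).card

lemma wt_step {n : ℕ} {a b : Fin n → Bool} (hab : a ≤ b) :
    wt b = wt a + (Finset.univ.filter fun i => ¬ a i = b i).card := by
  classical
  unfold wt
  rw [← Finset.card_union_of_disjoint]
  · congr 1
    ext i
    have h := hab i
    simp only [Finset.mem_union, Finset.mem_filter, Finset.mem_univ, true_and]
    rcases Bool.le_iff_imp.1 h with _
    cases ha : a i <;> cases hb : b i <;> simp_all
  · rw [Finset.disjoint_filter]
    intro i _ ha hd
    exact hd (by rw [ha, Bool.le_iff_imp.1 (hab i) ha])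

lemma vd_eq_one_iff {n : ℕ} {a b : Fin n → Bool} :
    vd a b = 1 ↔ a ≤ b ∧ (Finset.univ.filter fun i => ¬ a i = b i).card = 1 := by
  classical
  unfold vd
  split_ifs with h
  · have : ∀ i : Fin n, (if a i = b i then (0:ℝ≥0∞) else 1) = if ¬ a i = b i then 1 else 0 := by
      intro i; by_cases hi : a i = b i <;> simp [hi]
    rw [Finset.sum_congr rfl fun i _ => this i, Finset.sum_boole]
    rw [show (1:ℝ≥0∞) = ((1:ℕ):ℝ≥0∞) by simp, Nat.cast_inj]
    simp [h]
  · simp [h]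

lemma wt_f {m n : ℕ} {f : (Fin m → Bool) → (Fin n → Bool)} (hf : Cotransverse f)
    (ε : Fin m → Bool) : wt (f ε) = wt (f (fun _ => false)) + wt ε := by
  classical
  have key : ∀ s : Finset (Fin m),
      wt (f (fun k => decide (k ∈ s))) = wt (f (fun _ => false)) + s.card := by
    intro s
    induction s using Finset.induction with
    | empty => simp
    | @insert a s ha ih =>
      set u : Fin m → Bool := fun k => decide (k ∈ s) with hu
      set v : Fin m → Bool := fun k => decide (k ∈ insert a s) with hv
      have huv : u ≤ v := by
        intro k
        simp only [hu, hv, Bool.le_iff_imp, decide_eq_true_iff]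
        exact fun hk => Finset.mem_insert_of_mem hk
      have hdiff : (Finset.univ.filter fun k => ¬ u k = v k) = {a} := by
        ext k
        simp only [Finset.mem_filter, Finset.mem_univ, true_and, Finset.mem_singleton,
          hu, hv]
        constructor
        · intro hk
          by_contra hka
          exact hk (by simp [Finset.mem_insert, hka])
        · intro hk
          subst hk
          simp [ha]
      have hvd : vd u v = 1 := vd_eq_one_iff.2 ⟨huv, by rw [hdiff]; simp⟩
      obtain ⟨hle, hcard⟩ := vd_eq_one_iff.1 (hf.2 u v hvd)
      rw [Finset.card_insert_of_notMem ha]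
      have := wt_step hle
      omega
  have hε : ε = fun k => decide (k ∈ Finset.univ.filter fun k => ε k = true) := by
    funext k; cases h : ε k <;> simp [h]
  calc wt (f ε) = wt (f (fun k => decide (k ∈ Finset.univ.filter fun k => ε k = true))) := by
        rw [← hε]
    _ = wt (f (fun _ => false)) + (Finset.univ.filter fun k => ε k = true).card := key _
    _ = wt (f (fun _ => false)) + wt ε := rfl

lemma key_iff {m n : ℕ} {f : (Fin m → Bool) → (Fin n → Bool)} (hf : Cotransverse f)
    (z : Fin m → unitInterval) (i : Fin n) {t : ℝ} (ht0 : 0 < t) (ht1 : t ≤ 1) :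
    f (fun k => decide (t ≤ (z k : ℝ))) i = true ↔ t ≤ ((Tmap f z i : unitInterval) : ℝ) := by
  set τ : unitInterval := ⟨t, ht0.le, ht1⟩ with hτ
  have hcoe : ∀ a : unitInterval, (τ ≤ a) ↔ t ≤ (a : ℝ) := fun a => Iff.rfl
  constructor
  · intro h
    rw [← hcoe]
    refine le_trans ?_ (le_iSup₂ (f := fun ε (_ : f ε i = true) =>
        ⨅ (k : Fin m) (_ : ε k = true), z k) (fun k => decide (t ≤ (z k : ℝ))) h)
    refine le_iInf₂ fun k hk => ?_
    exact Subtype.coe_le_coe.1 (of_decide_eq_true hk)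
  · intro h
    rw [← hcoe] at h
    obtain ⟨ε, hmax⟩ := Finite.exists_max
      (fun ε : Fin m → Bool => ⨆ (_ : f ε i = true), ⨅ (k : Fin m) (_ : ε k = true), z k)
    have hsup : Tmap f z i ≤ ⨆ (_ : f ε i = true), ⨅ (k : Fin m) (_ : ε k = true), z k :=
      iSup_le hmax
    have hτε := le_trans h hsup
    by_cases hfe : f ε i = true
    · rw [iSup_pos hfe] at hτε
      have hle : ε ≤ fun k => decide (t ≤ (z k : ℝ)) := by
        intro k
        rw [Bool.le_iff_imp]
        intro hk
        have : τ ≤ z k := le_trans hτε (iInf₂_le k hk)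
        exact decide_eq_true_iff.2 this
      have := hf.1.monotone hle i
      rw [hfe] at this
      cases hfi : f (fun k => decide (t ≤ (z k : ℝ))) i
      · rw [hfi] at this; exact absurd this (by simp)
      · rfl
    · rw [iSup_neg hfe] at hτε
      have : t ≤ 0 := hτε
      linarith

lemma indic_eq (z : unitInterval) {t : ℝ} (ht0 : 0 < t) :
    (Set.Ioc (0:ℝ) (z:ℝ)).indicator (fun _ => (1:ℝ≥0∞)) t = if t ≤ (z:ℝ) then 1 else 0 := by
  rw [Set.indicator_apply]
  congr 1
  simp [Set.mem_Ioc, ht0]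

lemma indic_lint (z : unitInterval) :
    ∫⁻ t in Set.Ioc (0:ℝ) 1, (Set.Ioc (0:ℝ) (z:ℝ)).indicator (fun _ => (1:ℝ≥0∞)) t
      = ENNReal.ofReal (z:ℝ) := by
  rw [lintegral_indicator measurableSet_Ioc, setLIntegral_one,
    Measure.restrict_apply measurableSet_Ioc,
    Set.inter_eq_left.2 (Set.Ioc_subset_Ioc_right z.2.2), Real.volume_Ioc, sub_zero]

lemma wt_cast_sum {n : ℕ} (v : Fin n → Bool) :
    (∑ i, if v i = true then (1:ℝ≥0∞) else 0) = (wt v : ℝ≥0∞) := by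
  rw [Finset.sum_boole]; rfl

lemma sum_Tmap {m n : ℕ} {f : (Fin m → Bool) → (Fin n → Bool)} (hf : Cotransverse f)
    (z : Fin m → unitInterval) :
    ∑ i, ENNReal.ofReal ((Tmap f z i : ℝ)) =
      (wt (f (fun _ => false)) : ℝ≥0∞) + ∑ k, ENNReal.ofReal ((z k : ℝ)) := by
  have hpt : ∀ t ∈ Set.Ioc (0:ℝ) 1,
      (∑ i, (Set.Ioc (0:ℝ) ((Tmap f z i : ℝ))).indicator (fun _ => (1:ℝ≥0∞)) t)
        = (wt (f (fun _ => false)) : ℝ≥0∞)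
          + ∑ k, (Set.Ioc (0:ℝ) ((z k : ℝ))).indicator (fun _ => (1:ℝ≥0∞)) t := by
    intro t ht
    calc (∑ i, (Set.Ioc (0:ℝ) ((Tmap f z i : ℝ))).indicator (fun _ => (1:ℝ≥0∞)) t)
        = ∑ i, if f (fun k => decide (t ≤ (z k : ℝ))) i = true then (1:ℝ≥0∞) else 0 := by
          refine Finset.sum_congr rfl fun i _ => ?_
          rw [indic_eq _ ht.1]
          exact if_congr (key_iff hf z i ht.1 ht.2).symm rfl rfl
      _ = (wt (f (fun k => decide (t ≤ (z k : ℝ)))) : ℝ≥0∞) := wt_cast_sum _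
      _ = (wt (f (fun _ => false)) : ℝ≥0∞) + (wt (fun k => decide (t ≤ (z k : ℝ))) : ℝ≥0∞) := by
          rw [wt_f hf]; push_cast; ring
      _ = (wt (f (fun _ => false)) : ℝ≥0∞)
          + ∑ k, (Set.Ioc (0:ℝ) ((z k : ℝ))).indicator (fun _ => (1:ℝ≥0∞)) t := by
          congr 1
          rw [← wt_cast_sum]
          refine Finset.sum_congr rfl fun k _ => ?_
          rw [indic_eq _ ht.1]
          exact if_congr (by simp) rfl rfl
  calc ∑ i, ENNReal.ofReal ((Tmap f z i : ℝ))
      = ∑ i, ∫⁻ t in Set.Ioc (0:ℝ) 1,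
          (Set.Ioc (0:ℝ) ((Tmap f z i : ℝ))).indicator (fun _ => (1:ℝ≥0∞)) t := by
        refine Finset.sum_congr rfl fun i _ => (indic_lint _).symm
    _ = ∫⁻ t in Set.Ioc (0:ℝ) 1, ∑ i,
          (Set.Ioc (0:ℝ) ((Tmap f z i : ℝ))).indicator (fun _ => (1:ℝ≥0∞)) t :=
        (lintegral_finset_sum _ fun i _ => measurable_const.indicator measurableSet_Ioc).symm
    _ = ∫⁻ t in Set.Ioc (0:ℝ) 1, ((wt (f (fun _ => false)) : ℝ≥0∞)
          + ∑ k, (Set.Ioc (0:ℝ) ((z k : ℝ))).indicator (fun _ => (1:ℝ≥0∞)) t) :=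
        setLIntegral_congr_fun measurableSet_Ioc hpt
    _ = (wt (f (fun _ => false)) : ℝ≥0∞) + ∑ k, ENNReal.ofReal ((z k : ℝ)) := by
        rw [lintegral_add_left measurable_const, setLIntegral_const,
          lintegral_finset_sum _ fun k _ => measurable_const.indicator measurableSet_Ioc]
        simp only [indic_lint]
        rw [Real.volume_Ioc]
        norm_num

lemma sum_Tmap_real {m n : ℕ} {f : (Fin m → Bool) → (Fin n → Bool)} (hf : Cotransverse f)
    (z : Fin m → unitInterval) :
    ∑ i, ((Tmap f z i : ℝ)) = (wt (f (fun _ => false)) : ℝ) + ∑ k, ((z k : ℝ)) := by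
  have h := sum_Tmap hf z
  rw [← ENNReal.ofReal_sum_of_nonneg (fun i _ => (Tmap f z i).2.1),
    ← ENNReal.ofReal_natCast,
    ← ENNReal.ofReal_sum_of_nonneg (fun k _ => (z k).2.1),
    ← ENNReal.ofReal_add (Nat.cast_nonneg _)
      (Finset.sum_nonneg fun k _ => (z k).2.1)] at h
  exact (ENNReal.ofReal_eq_ofReal_iff
    (Finset.sum_nonneg fun i _ => (Tmap f z i).2.1)
    (add_nonneg (Nat.cast_nonneg _) (Finset.sum_nonneg fun k _ => (z k).2.1))).1 h

lemma Tmap_mono {m n : ℕ} (f : (Fin m → Bool) → (Fin n → Bool))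
    {x y : Fin m → unitInterval} (hxy : x ≤ y) : Tmap f x ≤ Tmap f y := by
  intro i
  exact iSup_mono fun ε => iSup_mono fun _ => iInf_mono fun k => iInf_mono fun _ => hxy k

/-- For every cotransverse map `f : [m] → [n]`, the map `T(f)` is
non-expansive for `d⃗₁` and quasi-isometric: it preserves finite distances. -/
theorem stmt9 (m n : ℕ) (f : (Fin m → Bool) → (Fin n → Bool))
    (hf : Cotransverse f) :
    ∀ x y : Fin m → unitInterval,
      dCube (Tmap f x) (Tmap f y) ≤ dCube x y ∧
      (dCube x y ≠ ⊤ → dCube (Tmap f x) (Tmap f y) = dCube x y) := by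
  intro x y
  by_cases hxy : x ≤ y
  · have hT : Tmap f x ≤ Tmap f y := Tmap_mono f hxy
    have hsum : ∑ i, ((Tmap f y i : ℝ) - (Tmap f x i : ℝ)) = ∑ k, ((y k : ℝ) - (x k : ℝ)) := by
      have h1 := sum_Tmap_real hf x
      have h2 := sum_Tmap_real hf y
      rw [Finset.sum_sub_distrib, Finset.sum_sub_distrib]
      rw [h1, h2]; ring
    have heq : dCube (Tmap f x) (Tmap f y) = dCube x y := by
      unfold dCube
      rw [if_pos hT, if_pos hxy]
      calc ∑ i, ENNReal.ofReal |(Tmap f x i : ℝ) - (Tmap f y i : ℝ)|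
          = ∑ i, ENNReal.ofReal ((Tmap f y i : ℝ) - (Tmap f x i : ℝ)) := by
            refine Finset.sum_congr rfl fun i _ => ?_
            rw [abs_of_nonpos (sub_nonpos.2 (Subtype.coe_le_coe.2 (hT i))), neg_sub]
        _ = ENNReal.ofReal (∑ i, ((Tmap f y i : ℝ) - (Tmap f x i : ℝ))) :=
            (ENNReal.ofReal_sum_of_nonneg fun i _ =>
              sub_nonneg.2 (Subtype.coe_le_coe.2 (hT i))).symm
        _ = ENNReal.ofReal (∑ k, ((y k : ℝ) - (x k : ℝ))) := by rw [hsum]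
        _ = ∑ k, ENNReal.ofReal ((y k : ℝ) - (x k : ℝ)) :=
            ENNReal.ofReal_sum_of_nonneg fun k _ =>
              sub_nonneg.2 (Subtype.coe_le_coe.2 (hxy k))
        _ = ∑ k, ENNReal.ofReal |(x k : ℝ) - (y k : ℝ)| := by
            refine Finset.sum_congr rfl fun k _ => ?_
            rw [abs_of_nonpos (sub_nonpos.2 (Subtype.coe_le_coe.2 (hxy k))), neg_sub]
    exact ⟨le_of_eq heq, fun _ => heq⟩
  · have htop : dCube x y = ⊤ := by unfold dCube; rw [if_neg hxy]
    exact ⟨htop ▸ le_top, fun h => absurd htop h⟩
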